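/- Let A be a real n×m matrix (n ≤ m) with all columns nonzero and no two columns scalar multiples of each other, and let H = ⋃_{i=1}^m {x ∈ ℝ^n : ⟨a_i, x⟩ = 0}. Then the map m : ℝ^n \ H → vert(Z(A)) defined by m(x) = A·sign(Aᵀx) is well defined and surjective onto the set of vertices of Z(A); i.e., every vertex v of Z(A) equals A·sign(Aᵀx) for some x ∈ ℝ^n with ⟨a_i, x⟩ ≠ 0 for all i. -/

import Mathlib

open Matrix

/-- The zonotope generated by the columns of an `n × m` real matrix `A`. -/
def zonotope {n m : ℕ} (A : Matrix (Fin n) (Fin m) ℝ) : Set (Fin n → ℝ) :=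
  {v | ∃ x : Fin m → ℝ, (∀ i, x i ∈ Set.Icc (-1 : ℝ) 1) ∧ v = A.mulVec x}

/-- The sign vector `sign(Aᵀ x) ∈ {-1,1}^m` (entries are `Real.sign ⟨aᵢ, x⟩`). -/
noncomputable def signVec {n m : ℕ} (A : Matrix (Fin n) (Fin m) ℝ) (x : Fin n → ℝ) :
    Fin m → ℝ :=
  fun i => Real.sign (Aᵀ.mulVec x i)

/- Auxiliary lemmas -/

lemma dot_key {n m : ℕ} (A : Matrix (Fin n) (Fin m) ℝ) (x : Fin n → ℝ) (u : Fin m → ℝ) :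
    x ⬝ᵥ A.mulVec u = ∑ i, u i * Aᵀ.mulVec x i := by
  rw [dotProduct_mulVec, ← mulVec_transpose]
  simp [dotProduct, mul_comm]

lemma sign_mul_self' (r : ℝ) (h : r ≠ 0) : Real.sign r * r = |r| := by
  rcases h.lt_or_gt with h|h
  · rw [Real.sign_of_neg h, abs_of_neg h]; ring
  · rw [Real.sign_of_pos h, abs_of_pos h]; ring

lemma sum_mul_le {m : ℕ} (c u : Fin m → ℝ) (hu : ∀ i, |u i| ≤ 1) :
    ∑ i, u i * c i ≤ ∑ i, |c i| := by
  refine Finset.sum_le_sum fun i _ => ?_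
  calc u i * c i ≤ |u i * c i| := le_abs_self _
    _ = |u i| * |c i| := abs_mul _ _
    _ ≤ 1 * |c i| := mul_le_mul_of_nonneg_right (hu i) (abs_nonneg _)
    _ = |c i| := one_mul _

lemma eq_sign_of_sum_eq {m : ℕ} (c u : Fin m → ℝ) (hu : ∀ i, |u i| ≤ 1)
    (hc : ∀ i, c i ≠ 0) (h : ∑ i, u i * c i = ∑ i, |c i|) :
    ∀ i, u i = Real.sign (c i) := by
  have hle : ∀ j, u j * c j ≤ |c j| := fun j => by
    calc u j * c j ≤ |u j * c j| := le_abs_self _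
      _ = |u j| * |c j| := abs_mul _ _
      _ ≤ 1 * |c j| := mul_le_mul_of_nonneg_right (hu j) (abs_nonneg _)
      _ = |c j| := one_mul _
  have hterm : ∀ i, u i * c i = |c i| := by
    by_contra hcon
    push_neg at hcon
    obtain ⟨i, hi⟩ := hcon
    have := Finset.sum_lt_sum (fun j _ => hle j)
      ⟨i, Finset.mem_univ i, lt_of_le_of_ne (hle i) hi⟩
    exact absurd h (ne_of_lt this)
  intro i
  rcases (hc i).lt_or_gt with hci|hci
  · have h1 := hterm i
    rw [abs_of_neg hci] at h1
    have h2 : (u i + 1) * c i = 0 := by nlinarith [h1]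
    rcases mul_eq_zero.1 h2 with h3|h3
    · rw [Real.sign_of_neg hci]; linarith
    · exact absurd h3 (ne_of_lt hci)
  · have h1 := hterm i
    rw [abs_of_pos hci] at h1
    have h2 : (u i - 1) * c i = 0 := by nlinarith [h1]
    rcases mul_eq_zero.1 h2 with h3|h3
    · rw [Real.sign_of_pos hci]; linarith
    · exact absurd h3 (ne_of_gt hci)

lemma mulVec_update {n m : ℕ} (A : Matrix (Fin n) (Fin m) ℝ) (u : Fin m → ℝ) (i : Fin m)
    (t : ℝ) : A.mulVec (u + t • (Pi.single i 1 : Fin m → ℝ))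
      = A.mulVec u + t • fun j => A j i := by
  rw [Matrix.mulVec_add, Matrix.mulVec_smul, mulVec_single_one]
  rfl

lemma linfunc_eq {m : ℕ} (w : Fin m → ℝ) (f : (Fin m → ℝ) →L[ℝ] ℝ) :
    f w = ∑ j, w j * f (Pi.single j 1) := by
  conv_lhs => rw [pi_eq_sum_univ w]
  rw [map_sum]
  refine Finset.sum_congr rfl fun j _ => ?_
  rw [_root_.map_smul, smul_eq_mul]
  congr 2
  ext k
  simp [Pi.single_apply, eq_comm]

lemma zonotope_convex {n m : ℕ} (A : Matrix (Fin n) (Fin m) ℝ) : Convex ℝ (zonotope A) := by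
  rintro v₁ ⟨x₁, hx₁, rfl⟩ v₂ ⟨x₂, hx₂, rfl⟩ a b ha hb hab
  refine ⟨a • x₁ + b • x₂, fun i => ?_, ?_⟩
  · exact (convex_Icc (-1 : ℝ) 1) (hx₁ i) (hx₂ i) ha hb hab
  · rw [Matrix.mulVec_add, Matrix.mulVec_smul, Matrix.mulVec_smul]

lemma convex_comb_eq {a b p q M : ℝ} (ha : 0 < a) (hb : 0 < b) (hab : a + b = 1)
    (hp : p ≤ M) (hq : q ≤ M) (hpq : a * p + b * q = M) : p = M := by
  have h5 : a * M + b * M = M := by rw [← add_mul, hab, one_mul]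
  have e1 : 0 ≤ a * (M - p) := mul_nonneg ha.le (by linarith)
  have e2 : 0 ≤ b * (M - q) := mul_nonneg hb.le (by linarith)
  have e3 : a * (M - p) + b * (M - q) = 0 := by rw [mul_sub, mul_sub]; linarith
  have e4 : a * (M - p) = 0 := by linarith
  have e5 := (mul_eq_zero.1 e4).resolve_left (ne_of_gt ha)
  linarith

theorem sign_map_wellDefined_and_onto (n m : ℕ) (hnm : n ≤ m)
    (A : Matrix (Fin n) (Fin m) ℝ)
    (hcol : ∀ i, (fun j => A j i) ≠ 0)
    (hpair : ∀ i i', i ≠ i' → ∀ c : ℝ, (fun j => A j i) ≠ c • fun j => A j i') :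
    (∀ x : Fin n → ℝ, (∀ i, Aᵀ.mulVec x i ≠ 0) →
        A.mulVec (signVec A x) ∈ (zonotope A).extremePoints ℝ) ∧
      (∀ v ∈ (zonotope A).extremePoints ℝ, ∃ x : Fin n → ℝ,
        (∀ i, Aᵀ.mulVec x i ≠ 0) ∧ A.mulVec (signVec A x) = v) := by
  constructor
  · -- well-definedness: the image is an extreme point
    intro x hx
    set c : Fin m → ℝ := Aᵀ.mulVec x with hc
    have hsign_bound : ∀ r : ℝ, Real.sign r ∈ Set.Icc (-1:ℝ) 1 := by
      intro r
      rcases lt_trichotomy r 0 with h|h|h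
      · simp [Real.sign_of_neg h]
      · simp [h, Real.sign_zero]
      · simp [Real.sign_of_pos h]
    have hmem : A.mulVec (signVec A x) ∈ zonotope A :=
      ⟨signVec A x, fun i => hsign_bound _, rfl⟩
    have hmax : x ⬝ᵥ A.mulVec (signVec A x) = ∑ i, |c i| := by
      rw [dot_key]
      exact Finset.sum_congr rfl fun i _ => sign_mul_self' (c i) (hx i)
    refine ⟨hmem, ?_⟩
    rintro y ⟨uy, huy, rfl⟩ z ⟨uz, huz, rfl⟩ ⟨a, b, ha, hb, hab, habv⟩
    have hbound : ∀ (u : Fin m → ℝ), (∀ i, u i ∈ Set.Icc (-1:ℝ) 1) → ∀ i, |u i| ≤ 1 :=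
      fun u hu i => abs_le.2 ⟨(hu i).1, (hu i).2⟩
    have hy_le : ∑ i, uy i * c i ≤ ∑ i, |c i| := sum_mul_le c uy (hbound uy huy)
    have hz_le : ∑ i, uz i * c i ≤ ∑ i, |c i| := sum_mul_le c uz (hbound uz huz)
    have hdot : a * (∑ i, uy i * c i) + b * (∑ i, uz i * c i) = ∑ i, |c i| := by
      have h0 := congrArg (fun w => x ⬝ᵥ w) habv
      simp only [dotProduct_add, dotProduct_smul, smul_eq_mul, hmax] at h0
      rw [dot_key, dot_key] at h0
      exact h0
    have hy_eq : ∑ i, uy i * c i = ∑ i, |c i| :=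
      convex_comb_eq ha hb hab hy_le hz_le hdot
    have hz_eq : ∑ i, uz i * c i = ∑ i, |c i| :=
      convex_comb_eq hb ha (by linarith) hz_le hy_le (by linarith)
    have huy_sign : uy = signVec A x := funext (eq_sign_of_sum_eq c uy (hbound uy huy) hx hy_eq)
    have huz_sign : uz = signVec A x := funext (eq_sign_of_sum_eq c uz (hbound uz huz) hx hz_eq)
    exact by rw [huy_sign]
  · -- surjectivity
    intro v hv
    obtain ⟨u, hu, rfl⟩ := hv.1
    -- Step A: the coefficient vector has entries ±1
    have hs : ∀ i, u i = 1 ∨ u i = -1 := by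
      intro i
      by_contra hcon
      push_neg at hcon
      have h1 : u i < 1 := lt_of_le_of_ne (hu i).2 hcon.1
      have h2 : -1 < u i := lt_of_le_of_ne (hu i).1 (fun h => hcon.2 h.symm)
      set ε : ℝ := min (1 - u i) (1 + u i) with hε
      have hεpos : 0 < ε := lt_min (by linarith) (by linarith)
      have hmem : ∀ t : ℝ, |t| ≤ ε →
          A.mulVec (u + t • (Pi.single i 1 : Fin m → ℝ)) ∈ zonotope A := by
        intro t ht
        refine ⟨u + t • (Pi.single i 1 : Fin m → ℝ), fun j => ?_, rfl⟩
        have h3 : ε ≤ 1 - u i := min_le_left _ _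
        have h4 : ε ≤ 1 + u i := min_le_right _ _
        have habs := abs_le.1 ht
        by_cases hji : j = i
        · subst hji
          simp only [Pi.add_apply, Pi.smul_apply, Pi.single_eq_same, smul_eq_mul, mul_one]
          constructor
          · linarith [habs.1]
          · linarith [habs.2]
        · simp only [Pi.add_apply, Pi.smul_apply, Pi.single_eq_of_ne hji, smul_eq_mul, mul_zero,
            add_zero]
          exact hu j
      have hyz : A.mulVec u ∈ openSegment ℝ (A.mulVec (u + ε • (Pi.single i 1 : Fin m → ℝ)))
          (A.mulVec (u + (-ε) • (Pi.single i 1 : Fin m → ℝ))) := by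
        refine ⟨1/2, 1/2, by norm_num, by norm_num, by norm_num, ?_⟩
        rw [mulVec_update, mulVec_update]
        ext j
        simp only [Pi.add_apply, Pi.smul_apply, smul_eq_mul]
        ring
      have hext := hv.2 (hmem ε (by rw [abs_of_pos hεpos]))
        (hmem (-ε) (by rw [abs_neg, abs_of_pos hεpos])) hyz
      have h5 : A.mulVec (u + ε • (Pi.single i 1 : Fin m → ℝ)) = A.mulVec u := hext
      rw [mulVec_update] at h5
      have h6 : ε • (fun j => A j i) = 0 := by
        have h7 := congrArg (fun w => w - A.mulVec u) h5
        simpa [add_sub_cancel_left] using h7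
      rcases smul_eq_zero.1 h6 with h7|h7
      · exact absurd h7 (ne_of_gt hεpos)
      · exact hcol i h7
    -- Step B: the finite candidate set
    set F : Set (Fin n → ℝ) :=
      (fun s => A.mulVec s) '' {s : Fin m → ℝ | ∀ i, s i = 1 ∨ s i = -1} with hF
    have hsetfin : ({s : Fin m → ℝ | ∀ i, s i = 1 ∨ s i = -1}).Finite := by
      have hsub : {s : Fin m → ℝ | ∀ i, s i = 1 ∨ s i = -1} ⊆
          Set.pi Set.univ (fun _ : Fin m => ({1, -1} : Set ℝ)) := by
        intro s hsi i _
        rcases hsi i with h|h <;> simp [h]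
      exact Set.Finite.subset (Set.Finite.pi fun _ => (Set.finite_singleton (-1:ℝ)).insert 1) hsub
    have hFfin : F.Finite := hsetfin.image _
    have hFZ : F ⊆ zonotope A := by
      rintro w ⟨s, hsmem, rfl⟩
      refine ⟨s, fun i => ?_, rfl⟩
      rcases hsmem i with h|h <;> simp [h]
    set v := A.mulVec u with hvdef
    have hvF : v ∈ F := ⟨u, hs, rfl⟩
    -- Step C: v is not in the hull of the other candidates
    have hdiff : v ∉ convexHull ℝ (zonotope A \ {v}) :=
      (((zonotope_convex A).mem_extremePoints_iff_mem_diff_convexHull_diff).1 hv).2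
    have hvnot : v ∉ convexHull ℝ (F \ {v}) := fun h =>
      hdiff (convexHull_mono (Set.diff_subset_diff_left hFZ) h)
    -- Step D: separation
    have hclosed : IsClosed (convexHull ℝ (F \ {v})) :=
      ((hFfin.diff : (F \ {v}).Finite).isCompact_convexHull (𝕜 := ℝ)).isClosed
    obtain ⟨f, r, hfw, hfv⟩ :=
      geometric_hahn_banach_closed_point (convex_convexHull ℝ _) hclosed hvnot
    have hsep : ∀ w ∈ F \ {v}, f w < f v :=
      fun w hw => lt_trans (hfw w (subset_convexHull ℝ _ hw)) hfv
    -- the separating vector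
    set x : Fin n → ℝ := fun j => f (Pi.single j 1) with hxdef
    have hc_eq : ∀ i, Aᵀ.mulVec x i = f (fun j => A j i) := by
      intro i
      rw [linfunc_eq (fun j => A j i) f]
      simp [Matrix.mulVec, dotProduct, Matrix.transpose_apply, hxdef]
    -- flipping coordinate i shows each inner product has the sign of `u i`
    have hkey : ∀ i, 0 < u i * Aᵀ.mulVec x i := by
      intro i
      have hflip_mem : A.mulVec (u + (-(2 * u i)) • (Pi.single i 1 : Fin m → ℝ)) ∈ F := by
        refine ⟨u + (-(2 * u i)) • (Pi.single i 1 : Fin m → ℝ), fun j => ?_, rfl⟩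
        by_cases hji : j = i
        · subst hji
          simp only [Pi.add_apply, Pi.smul_apply, Pi.single_eq_same, smul_eq_mul, mul_one]
          rcases hs j with h|h <;> rw [h]
          · right; norm_num
          · left; norm_num
        · simp only [Pi.add_apply, Pi.smul_apply, Pi.single_eq_of_ne hji, smul_eq_mul, mul_zero,
            add_zero]
          exact hs j
      have hflip_ne : A.mulVec (u + (-(2 * u i)) • (Pi.single i 1 : Fin m → ℝ)) ≠ v := by
        rw [mulVec_update]
        intro h
        have h6 : (-(2 * u i)) • (fun j => A j i) = 0 := by
          have h7 := congrArg (fun w => w - A.mulVec u) h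
          simpa [add_sub_cancel_left, hvdef] using h7
        rcases smul_eq_zero.1 h6 with h7|h7
        · rcases hs i with h8|h8 <;> rw [h8] at h7 <;> norm_num at h7
        · exact hcol i h7
      have hlt := hsep _ ⟨hflip_mem, hflip_ne⟩
      rw [mulVec_update] at hlt
      rw [map_add, _root_.map_smul, smul_eq_mul] at hlt
      rw [hc_eq i]
      rw [← hvdef] at hlt
      nlinarith [hlt]
    refine ⟨x, fun i hzero => ?_, ?_⟩
    · have h9 := hkey i
      rw [hzero, mul_zero] at h9
      exact lt_irrefl _ h9
    · have husign : signVec A x = u := by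
        funext i
        rcases hs i with h|h
        · have h9 := hkey i
          rw [h, one_mul] at h9
          simp [signVec, Real.sign_of_pos h9, h]
        · have h9 := hkey i
          rw [h] at h9
          have hneg : Aᵀ.mulVec x i < 0 := by nlinarith [h9]
          simp [signVec, Real.sign_of_neg hneg, h]
      rw [husign]
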